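/- Let 0 ≤ α ≤ 652 and let Q(x,y) = (x⁴−y⁴)^α(x⁸+14x⁴y⁴+y⁸)² over the rationals. If the coefficient of (x⁴)^{α+4−i}(−y⁴)^i in Q vanishes for some i with 0 ≤ i ≤ (α+4)/2, then (α, i) = (28, 1). -/

import Mathlib

/-! ### Integer coefficient rows -/

/-- One step of the Pascal-type recursion over ℤ. -/
def goStepZ : List ℤ → ℤ → List ℤ :=
  List.rec (fun prev => [prev]) (fun x _ ih prev => (prev + x) :: ih x)

def stepZ (l : List ℤ) : List ℤ := goStepZ l 0

/-- Row `α`: coefficients of `(1+t)^α * (1 - 28t + 198t² - 28t³ + t⁴)`. -/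
def rowZ : ℕ → List ℤ :=
  fun n => Nat.rec [1, -28, 198, -28, 1] (fun _ ih => stepZ ih) n

def G (α b : ℕ) : ℤ := (rowZ α).getD b 0

lemma goStepZ_getD : ∀ (l : List ℤ) (prev : ℤ) (b : ℕ),
    (goStepZ l prev).getD b 0 = (prev :: l).getD b 0 + l.getD b 0 := by
  intro l
  induction l with
  | nil => intro prev b; cases b <;> simp [goStepZ]
  | cons x xs ih =>
      intro prev b
      cases b with
      | zero => simp [goStepZ]
      | succ b => simpa [goStepZ] using ih x b

lemma goStepZ_cons (x prev : ℤ) (xs : List ℤ) :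
    goStepZ (x :: xs) prev = (prev + x) :: goStepZ xs x := rfl

lemma goStepZ_length : ∀ (l : List ℤ) (prev : ℤ),
    (goStepZ l prev).length = l.length + 1 := by
  intro l
  induction l with
  | nil => intro prev; rfl
  | cons x xs ih => intro prev; rw [goStepZ_cons]; simp [ih]

lemma rowZ_length : ∀ n, (rowZ n).length = n + 5 := by
  intro n
  induction n with
  | zero => rfl
  | succ n ih =>
      show (stepZ (rowZ n)).length = n + 6
      rw [stepZ, goStepZ_length, ih]

lemma G_of_big {α b : ℕ} (h : α + 5 ≤ b) : G α b = 0 := by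
  have := rowZ_length α
  rw [G]
  simp [List.getD, List.getElem?_eq_none (show (rowZ α).length ≤ b by omega)]

lemma G_succ (α b : ℕ) : G (α + 1) (b + 1) = G α (b + 1) + G α b := by
  show (stepZ (rowZ α)).getD (b+1) 0 = _
  rw [stepZ, goStepZ_getD]
  simp [G, add_comm]

lemma G_succ_zero (α : ℕ) : G (α + 1) 0 = G α 0 := by
  show (stepZ (rowZ α)).getD 0 0 = _
  rw [stepZ, goStepZ_getD]
  simp [G]

/-! ### Mod-p rows -/

def goStepP (p : ℕ) : List ℕ → ℕ → List ℕ :=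
  List.rec (fun prev => [prev % p]) (fun x _ ih prev => (prev + x) % p :: ih x)

def stepP (p : ℕ) (l : List ℕ) : List ℕ := goStepP p l 0

def baseP (p : ℕ) : List ℕ := [1 % p, (p - 28) % p, 198 % p, (p - 28) % p, 1 % p]

def rowP (p : ℕ) : ℕ → List ℕ :=
  fun n => Nat.rec (baseP p) (fun _ ih => stepP p ih) n

lemma goStepP_getD (p : ℕ) : ∀ (l : List ℕ) (prev : ℕ) (b : ℕ),
    (((goStepP p l prev).getD b 0 : ℕ) : ZMod p)
      = ((prev :: l).getD b 0 : ℕ) + (l.getD b 0 : ℕ) := by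
  intro l
  induction l with
  | nil => intro prev b; cases b <;> simp [goStepP]
  | cons x xs ih =>
      intro prev b
      cases b with
      | zero => simp [goStepP]
      | succ b => simpa [goStepP] using ih x b

lemma goStepP_cons (p x prev : ℕ) (xs : List ℕ) :
    goStepP p (x :: xs) prev = (prev + x) % p :: goStepP p xs x := rfl

lemma goStepP_length (p : ℕ) : ∀ (l : List ℕ) (prev : ℕ),
    (goStepP p l prev).length = l.length + 1 := by
  intro l
  induction l with
  | nil => intro prev; rfl
  | cons x xs ih => intro prev; rw [goStepP_cons]; simp [ih]

lemma rowP_length (p : ℕ) : ∀ n, (rowP p n).length = n + 5 := by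
  intro n
  induction n with
  | zero => rfl
  | succ n ih =>
      show (stepP p (rowP p n)).length = n + 6
      rw [stepP, goStepP_length, ih]

lemma goStepP_lt (p : ℕ) (hp : 0 < p) : ∀ (l : List ℕ) (prev : ℕ) (b : ℕ),
    (goStepP p l prev).getD b 0 < p := by
  intro l
  induction l with
  | nil =>
      intro prev b
      cases b with
      | zero => simpa [goStepP] using Nat.mod_lt _ hp
      | succ b => simpa [goStepP] using hp
  | cons x xs ih =>
      intro prev b
      cases b with
      | zero => simpa [goStepP] using Nat.mod_lt _ hp
      | succ b => simpa [goStepP] using ih x b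

lemma rowP_lt (p : ℕ) (hp : 0 < p) : ∀ n b, (rowP p n).getD b 0 < p := by
  intro n b
  cases n with
  | zero =>
      match b with
      | 0 => exact Nat.mod_lt _ hp
      | 1 => exact Nat.mod_lt _ hp
      | 2 => exact Nat.mod_lt _ hp
      | 3 => exact Nat.mod_lt _ hp
      | 4 => exact Nat.mod_lt _ hp
      | (n+5) => exact hp
  | succ n => exact goStepP_lt p hp (rowP p n) 0 b

lemma rowP_cast (p : ℕ) (hp : 198 < p) : ∀ n b,
    (((rowP p n).getD b 0 : ℕ) : ZMod p) = (((rowZ n).getD b 0 : ℤ) : ZMod p) := by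
  intro n
  induction n with
  | zero =>
      intro b
      have h28 : (28 : ℕ) ≤ p := by omega
      match b with
      | 0 => show ((1 % p : ℕ) : ZMod p) = ((1 : ℤ) : ZMod p); rw [ZMod.natCast_mod]; push_cast; norm_num
      | 1 =>
          show (((p - 28) % p : ℕ) : ZMod p) = ((-28 : ℤ) : ZMod p)
          rw [ZMod.natCast_mod, Nat.cast_sub h28, ZMod.natCast_self]
          push_cast; ring
      | 2 => show ((198 % p : ℕ) : ZMod p) = ((198 : ℤ) : ZMod p); rw [ZMod.natCast_mod]; push_cast; norm_num
      | 3 =>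
          show (((p - 28) % p : ℕ) : ZMod p) = ((-28 : ℤ) : ZMod p)
          rw [ZMod.natCast_mod, Nat.cast_sub h28, ZMod.natCast_self]
          push_cast; ring
      | 4 => show ((1 % p : ℕ) : ZMod p) = ((1 : ℤ) : ZMod p); rw [ZMod.natCast_mod]; push_cast; norm_num
      | (n+5) => show ((0:ℕ) : ZMod p) = ((0:ℤ) : ZMod p); simp
  | succ n ih =>
      intro b
      have h1 : (((rowP p (n+1)).getD b 0 : ℕ) : ZMod p)
          = ((0 :: rowP p n).getD b 0 : ℕ) + ((rowP p n).getD b 0 : ℕ) :=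
        goStepP_getD p (rowP p n) 0 b
      have h2 : ((rowZ (n+1)).getD b 0 : ℤ)
          = (0 :: rowZ n).getD b 0 + (rowZ n).getD b 0 :=
        goStepZ_getD (rowZ n) 0 b
      cases b with
      | zero =>
          rw [h1, h2]
          simp only [List.getD_cons_zero, Int.cast_add, Int.cast_zero, Nat.cast_add]
          rw [ih 0]
          push_cast
          ring
      | succ b =>
          rw [h1, h2]
          simp only [List.getD_cons_succ, Int.cast_add, Nat.cast_add]
          rw [ih b, ih (b+1)]


def ok1 : List ℕ → Bool :=
  List.rec true (fun x _ ih => (decide (x ≠ 0)) && ih)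

def takeN : ℕ → List ℕ → List ℕ :=
  Nat.rec (fun _ => []) (fun _ ih l => l.casesOn [] (fun x xs => x :: ih xs))

def fix28 : List ℕ → List ℕ :=
  fun l => l.casesOn [] (fun x xs => x :: xs.casesOn [] (fun _ ys => 1 :: ys))

lemma ok1_cons (x : ℕ) (xs : List ℕ) : ok1 (x :: xs) = ((decide (x ≠ 0)) && ok1 xs) := rfl

lemma ok1_getD : ∀ l : List ℕ, ok1 l = true → ∀ b < l.length, l.getD b 0 ≠ 0 := by
  intro l
  induction l with
  | nil => intro _ b hb; simp at hb
  | cons x xs ih =>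
      intro h b hb
      rw [ok1_cons, Bool.and_eq_true] at h
      cases b with
      | zero => simpa using of_decide_eq_true h.1
      | succ b => exact ih h.2 b (by simpa using hb)

lemma takeN_getD : ∀ (k : ℕ) (l : List ℕ) (b : ℕ), b < k →
    (takeN k l).getD b 0 = l.getD b 0 := by
  intro k
  induction k with
  | zero => intro l b hb; omega
  | succ k ih =>
      intro l b hb
      cases l with
      | nil => rfl
      | cons x xs =>
          cases b with
          | zero => rfl
          | succ b => exact ih xs b (by omega)

lemma takeN_length : ∀ (k : ℕ) (l : List ℕ), (takeN k l).length = min k l.length := by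
  intro k
  induction k with
  | zero => intro l; simp [takeN]
  | succ k ih =>
      intro l
      cases l with
      | nil => simp [takeN]
      | cons x xs => show (x :: takeN k xs).length = _; simp [ih xs]

lemma fix28_getD : ∀ (l : List ℕ) (b : ℕ), b ≠ 1 → (fix28 l).getD b 0 = l.getD b 0 := by
  intro l b hb
  match l, b with
  | [], b => rfl
  | [x], 0 => rfl
  | [x], (b+1) => rfl
  | (x :: y :: ys), 0 => rfl
  | (x :: y :: ys), 1 => exact absurd rfl hb
  | (x :: y :: ys), (b+2) => rfl

lemma fix28_length : ∀ l : List ℕ, (fix28 l).length = l.length := by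
  intro l
  match l with
  | [] => rfl
  | [x] => rfl
  | (x :: y :: ys) => rfl

def okRow (a : ℕ) (r : List ℕ) : Bool :=
  ok1 (takeN (a/2+3) (if a = 28 then fix28 r else r))

def loopChk : ℕ → ℕ → List ℕ → Bool :=
  fun n => Nat.rec (motive := fun _ => ℕ → List ℕ → Bool)
    (fun _ _ => true)
    (fun _ ih a r => okRow a r && ih (a+1) (stepP 16451 r)) n

lemma loopChk_succ (n a : ℕ) (r : List ℕ) :
    loopChk (n+1) a r = (okRow a r && loopChk n (a+1) (stepP 16451 r)) := rfl

lemma loopChk_extract : ∀ (n a : ℕ), loopChk n a (rowP 16451 a) = true →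
    ∀ j < n, okRow (a + j) (rowP 16451 (a + j)) = true := by
  intro n
  induction n with
  | zero => intro a _ j hj; omega
  | succ n ih =>
      intro a h j hj
      rw [loopChk_succ, Bool.and_eq_true] at h
      cases j with
      | zero => exact h.1
      | succ j =>
          have h2 : loopChk n (a+1) (rowP 16451 (a+1)) = true := h.2
          have := ih (a+1) h2 j (by omega)
          have heq : a + 1 + j = a + (j + 1) := by omega
          rwa [heq] at this

set_option maxRecDepth 10000 in
set_option maxHeartbeats 4000000 in
theorem bigCheck : loopChk 653 0 (baseP 16451) = true := rfl

lemma okRow_all : ∀ a < 653, okRow a (rowP 16451 a) = true := by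
  intro a ha
  simpa using loopChk_extract 653 0 bigCheck a ha

lemma entry_ne_zero (a i : ℕ) (ha : a < 653) (hi : i < a/2 + 3)
    (hne : ¬(a = 28 ∧ i = 1)) : (rowP 16451 a).getD i 0 ≠ 0 := by
  have hok := okRow_all a ha
  rw [okRow] at hok
  set r' := if a = 28 then fix28 (rowP 16451 a) else rowP 16451 a with hr'
  have hlen : r'.length = a + 5 := by
    rw [hr']; split <;> simp [fix28_length, rowP_length]
  have h1 : (takeN (a/2+3) r').getD i 0 ≠ 0 := by
    apply ok1_getD _ hok
    rw [takeN_length, hlen]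
    omega
  rw [takeN_getD _ _ _ hi] at h1
  rw [hr'] at h1
  by_cases h28 : a = 28
  · rw [if_pos h28] at h1
    have hi1 : i ≠ 1 := fun h => hne ⟨h28, h⟩
    rwa [fix28_getD _ _ hi1] at h1
  · rwa [if_neg h28] at h1

/-! ### MvPolynomial part -/

open MvPolynomial

noncomputable abbrev Qpoly2 (α : ℕ) : MvPolynomial (Fin 2) ℚ :=
  ((X 0)^4 - (X 1)^4)^α * ((X 0)^8 + 14 * (X 0)^4 * (X 1)^4 + (X 1)^8)^2

noncomputable abbrev Mm (s t : ℕ) : Fin 2 →₀ ℕ := Finsupp.single 0 s + Finsupp.single 1 t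

lemma Mm_eq {s t s' t' : ℕ} : Mm s t = Mm s' t' ↔ s = s' ∧ t = t' := by
  constructor
  · intro h
    have h0 := DFunLike.congr_fun h 0
    have h1 := DFunLike.congr_fun h 1
    simp [Finsupp.single_apply] at h0 h1
    exact ⟨h0, h1⟩
  · rintro ⟨rfl, rfl⟩; rfl

lemma Mm_apply0 (s t : ℕ) : (Mm s t) 0 = s := by
  simp [Finsupp.single_apply]

lemma Mm_apply1 (s t : ℕ) : (Mm s t) 1 = t := by
  simp [Finsupp.single_apply]

lemma single_le_Mm0 (u s t : ℕ) : Finsupp.single (0 : Fin 2) u ≤ Mm s t ↔ u ≤ s := by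
  rw [Finsupp.single_le_iff, Mm_apply0]

lemma single_le_Mm1 (u s t : ℕ) : Finsupp.single (1 : Fin 2) u ≤ Mm s t ↔ u ≤ t := by
  rw [Finsupp.single_le_iff, Mm_apply1]

lemma Mm_sub0 (s t u : ℕ) : Mm s t - Finsupp.single (0 : Fin 2) u = Mm (s - u) t := by
  ext j
  fin_cases j <;> simp [Finsupp.tsub_apply, Finsupp.single_apply]

lemma Mm_sub1 (s t u : ℕ) : Mm s t - Finsupp.single (1 : Fin 2) u = Mm s (t - u) := by
  ext j
  fin_cases j <;> simp [Finsupp.tsub_apply, Finsupp.single_apply]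

lemma monomial_Mm (s t : ℕ) (c : ℚ) :
    (monomial (Mm s t) c : MvPolynomial (Fin 2) ℚ) = C c * X 0 ^ s * X 1 ^ t := by
  rw [X_pow_eq_monomial, X_pow_eq_monomial, C_apply, monomial_mul, monomial_mul]
  simp

lemma hP : ((X 0 : MvPolynomial (Fin 2) ℚ)^8 + 14*(X 0)^4*(X 1)^4 + (X 1)^8)^2
    = monomial (Mm 16 0) 1 + monomial (Mm 12 4) 28 + monomial (Mm 8 8) 198
      + monomial (Mm 4 12) 28 + monomial (Mm 0 16) 1 := by
  rw [monomial_Mm, monomial_Mm, monomial_Mm, monomial_Mm, monomial_Mm]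
  simp only [map_ofNat, C_1]
  ring

lemma rowZ_zero : rowZ 0 = [1, -28, 198, -28, 1] := rfl

lemma coeff_Q : ∀ (α a b : ℕ), coeff (Mm (4*a) (4*b)) (Qpoly2 α)
    = if a + b = α + 4 then (-1 : ℚ)^b * (G α b : ℚ) else 0 := by
  intro α
  induction α with
  | zero =>
      intro a b
      have h0 : Qpoly2 0 = ((X 0)^8 + 14*(X 0)^4*(X 1)^4 + (X 1)^8)^2 := by
        rw [Qpoly2, pow_zero, one_mul]
      rw [h0, hP]
      simp only [coeff_add, coeff_monomial]
      by_cases h4 : a + b = 4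
      · rw [if_pos h4]
        have ha : a ≤ 4 := by omega
        have hb : b ≤ 4 := by omega
        interval_cases a <;> interval_cases b <;>
          simp_all [Mm_eq, G, rowZ_zero] <;> norm_num
      · rw [if_neg h4]
        rw [if_neg (fun hc => h4 (by rcases Mm_eq.mp hc with ⟨h1, h2⟩; omega)),
            if_neg (fun hc => h4 (by rcases Mm_eq.mp hc with ⟨h1, h2⟩; omega)),
            if_neg (fun hc => h4 (by rcases Mm_eq.mp hc with ⟨h1, h2⟩; omega)),
            if_neg (fun hc => h4 (by rcases Mm_eq.mp hc with ⟨h1, h2⟩; omega)),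
            if_neg (fun hc => h4 (by rcases Mm_eq.mp hc with ⟨h1, h2⟩; omega))]
        norm_num
  | succ α ih =>
      intro a b
      have hQ : Qpoly2 (α+1) = ((X 0)^4 - (X 1)^4) * Qpoly2 α := by
        rw [Qpoly2, Qpoly2]; ring
      rw [hQ, sub_mul, coeff_sub, X_pow_eq_monomial, X_pow_eq_monomial,
          coeff_monomial_mul', coeff_monomial_mul']
      rcases a with _ | a' <;> rcases b with _ | b'
      · -- a = 0, b = 0
        rw [if_neg (by rw [single_le_Mm0]; omega), if_neg (by rw [single_le_Mm1]; omega)]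
        rw [if_neg (by omega)]
        norm_num
      · -- a = 0, b = b'+1
        rw [if_neg (by rw [single_le_Mm0]; omega), if_pos (by rw [single_le_Mm1]; omega)]
        rw [Mm_sub1]
        have : 4 * (b' + 1) - 4 = 4 * b' := by omega
        rw [this, ih 0 b']
        by_cases hc : b' + 1 = α + 5
        · rw [if_pos (by omega), if_pos (by omega)]
          have hz : G α (b' + 1) = 0 := G_of_big (by omega)
          rw [G_succ, hz]
          push_cast
          ring
        · rw [if_neg (by omega), if_neg (by omega)]
          norm_num
      · -- a = a'+1, b = 0
        rw [if_pos (by rw [single_le_Mm0]; omega), if_neg (by rw [single_le_Mm1]; omega)]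
        rw [Mm_sub0]
        have : 4 * (a' + 1) - 4 = 4 * a' := by omega
        rw [this, ih a' 0]
        by_cases hc : a' + 1 = α + 5
        · rw [if_pos (by omega), if_pos (by omega)]
          rw [G_succ_zero]
          push_cast
          ring
        · rw [if_neg (by omega), if_neg (by omega)]
          norm_num
      · -- a = a'+1, b = b'+1
        rw [if_pos (by rw [single_le_Mm0]; omega), if_pos (by rw [single_le_Mm1]; omega)]
        rw [Mm_sub0, Mm_sub1]
        have e1 : 4 * (a' + 1) - 4 = 4 * a' := by omega
        have e2 : 4 * (b' + 1) - 4 = 4 * b' := by omega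
        rw [e1, e2, ih a' (b' + 1), ih (a' + 1) b']
        by_cases hc : a' + 1 + (b' + 1) = α + 5
        · rw [if_pos (by omega), if_pos (by omega), if_pos (by omega)]
          rw [G_succ]
          push_cast
          ring
        · rw [if_neg (by omega), if_neg (by omega), if_neg (by omega)]
          norm_num

theorem stmt_6 (α i : ℕ) (hα : α ≤ 652) (hi : 2 * i ≤ α + 4)
    (h : MvPolynomial.coeff
      (Finsupp.single (0 : Fin 2) (4 * (α + 4 - i)) + Finsupp.single (1 : Fin 2) (4 * i))
      (Qpoly2 α) = 0) :
    α = 28 ∧ i = 1 := by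
  have hcoeff := coeff_Q α (α + 4 - i) i
  rw [if_pos (by omega)] at hcoeff
  rw [hcoeff] at h
  have hG : (G α i : ℚ) = 0 := by
    rcases mul_eq_zero.mp h with h' | h'
    · exact absurd h' (pow_ne_zero _ (by norm_num))
    · exact h'
  have hGZ : G α i = 0 := by exact_mod_cast hG
  by_contra hne
  have hent := entry_ne_zero α i (by omega) (by omega) hne
  apply hent
  have hcast := rowP_cast 16451 (by norm_num) α i
  rw [show (rowZ α).getD i 0 = G α i from rfl, hGZ] at hcast
  haveI : NeZero (16451 : ℕ) := ⟨by norm_num⟩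
  have hdvd : (16451 : ℕ) ∣ (rowP 16451 α).getD i 0 := by
    rw [← ZMod.natCast_eq_zero_iff]
    simpa using hcast
  exact Nat.eq_zero_of_dvd_of_lt hdvd (rowP_lt _ (by norm_num) α i)
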